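/- The belief-space Bellman operator is a contraction and its fixed point is concave: the operator H is Lipschitz with constant β in the supremum distance on bounded functions on Δ, hence has a unique bounded fixed point v* : Δ → ℝ, and v* is concave on Δ. -/

import Mathlib

open Filter

/-- The belief-space Bellman operator of a POMDP is Lipschitz with constant `β` in the
supremum distance on functions bounded on the belief simplex `Δ`; hence it has a unique
bounded fixed point `v*` on `Δ`, and `v*` is concave on `Δ`. -/
theorem belief_bellman_contraction_concave_fixed_point
    {I A Z : Type*} [Fintype I] [Nonempty I] [Fintype A] [Nonempty A]
    [Fintype Z] [Nonempty Z]
    (β : ℝ) (hβ0 : 0 ≤ β) (hβ1 : β < 1)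
    (c : A → I → ℝ) (M : A → Z → Matrix I I ℝ)
    (hM0 : ∀ a z i j, 0 ≤ M a z i j)
    (hM1 : ∀ a i, ∑ z, ∑ j, M a z i j = 1)
    (Δ : Set (I → ℝ)) (hΔ : Δ = {p : I → ℝ | (∀ i, 0 ≤ p i) ∧ ∑ i, p i = 1})
    (σ : A → Z → (I → ℝ) → ℝ)
    (hσ : ∀ a z p, σ a z p = ∑ i, ∑ j, p i * M a z i j)
    (τ : A → Z → (I → ℝ) → (I → ℝ))
    (hτ : ∀ a z p j, τ a z p j = (∑ i, p i * M a z i j) / σ a z p)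
    (H : ((I → ℝ) → ℝ) → ((I → ℝ) → ℝ))
    (hH : ∀ v p, H v p = Finset.univ.inf' Finset.univ_nonempty
          (fun a : A => ∑ i, c a i * p i +
            β * ∑ z ∈ Finset.univ.filter (fun z => 0 < σ a z p),
              σ a z p * v (τ a z p))) :
    (∀ v w : (I → ℝ) → ℝ,
        (∃ B, ∀ p ∈ Δ, |v p| ≤ B) → (∃ B, ∀ p ∈ Δ, |w p| ≤ B) →
        ∀ p ∈ Δ, |H v p - H w p| ≤ β * ⨆ q : Δ, |v q.1 - w q.1|) ∧
    ∃ vstar : (I → ℝ) → ℝ,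
      (∃ B, ∀ p ∈ Δ, |vstar p| ≤ B) ∧
      (∀ p ∈ Δ, H vstar p = vstar p) ∧
      (∀ w : (I → ℝ) → ℝ, (∃ B, ∀ p ∈ Δ, |w p| ≤ B) →
        (∀ p ∈ Δ, H w p = w p) → ∀ p ∈ Δ, w p = vstar p) ∧
      ConcaveOn ℝ Δ vstar := by
  classical
  have hΔmem : ∀ p : I → ℝ, p ∈ Δ ↔ (∀ i, 0 ≤ p i) ∧ ∑ i, p i = 1 := by
    intro p; rw [hΔ]; rfl
  -- Δ is nonempty
  have hΔne : (fun _ : I => (1 : ℝ) / Fintype.card I) ∈ Δ := by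
    rw [hΔmem]
    constructor
    · intro i; positivity
    · rw [Finset.sum_const, nsmul_eq_mul, Finset.card_univ]
      field_simp
  -- Δ is convex
  have hconv : Convex ℝ Δ := by
    intro p hp q hq a b ha hb hab
    rw [hΔmem] at hp hq ⊢
    constructor
    · intro i
      simpa using add_nonneg (mul_nonneg ha (hp.1 i)) (mul_nonneg hb (hq.1 i))
    · simp only [Pi.add_apply, Pi.smul_apply, smul_eq_mul]
      rw [Finset.sum_add_distrib, ← Finset.mul_sum, ← Finset.mul_sum, hp.2, hq.2]
      simpa using hab
  -- basic positivity facts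
  have hnum_nonneg : ∀ (a : A) (z : Z) (p : I → ℝ), (∀ i, 0 ≤ p i) →
      ∀ j, 0 ≤ ∑ i, p i * M a z i j :=
    fun a z p hp j => Finset.sum_nonneg fun i _ => mul_nonneg (hp i) (hM0 a z i j)
  have hσ_nonneg : ∀ (a : A) (z : Z) (p : I → ℝ), (∀ i, 0 ≤ p i) → 0 ≤ σ a z p := by
    intro a z p hp
    rw [hσ]
    exact Finset.sum_nonneg fun i _ =>
      Finset.sum_nonneg fun j _ => mul_nonneg (hp i) (hM0 a z i j)
  have hσ_sum_j : ∀ (a : A) (z : Z) (p : I → ℝ), σ a z p = ∑ j, ∑ i, p i * M a z i j := by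
    intro a z p; rw [hσ, Finset.sum_comm]
  have hσ_sum : ∀ (a : A) (p : I → ℝ), ∑ i, p i = 1 → ∑ z, σ a z p = 1 := by
    intro a p hp
    have h1 : ∑ z, σ a z p = ∑ i, p i * ∑ z, ∑ j, M a z i j := by
      simp_rw [hσ, Finset.mul_sum]
      rw [Finset.sum_comm]
    rw [h1]
    simp_rw [hM1]
    simpa using hp
  have hτ_mem : ∀ (a : A) (z : Z) (p : I → ℝ), p ∈ Δ → 0 < σ a z p → τ a z p ∈ Δ := by
    intro a z p hp hpos
    rw [hΔmem] at hp ⊢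
    constructor
    · intro j; rw [hτ]; exact div_nonneg (hnum_nonneg a z p hp.1 j) hpos.le
    · simp_rw [hτ]
      rw [← Finset.sum_div, ← hσ_sum_j, div_self hpos.ne']
  -- a generic bound on the filtered expectation sums
  have hsum_bound : ∀ (p : I → ℝ), p ∈ Δ → ∀ (a : A) (u : Z → ℝ) (B : ℝ), 0 ≤ B →
      (∀ z, 0 < σ a z p → |u z| ≤ B) →
      |∑ z ∈ Finset.univ.filter (fun z => 0 < σ a z p), σ a z p * u z| ≤ B := by
    intro p hp a u B hB0 hu
    rw [hΔmem] at hp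
    set F := Finset.univ.filter (fun z => 0 < σ a z p) with hF
    calc |∑ z ∈ F, σ a z p * u z| ≤ ∑ z ∈ F, |σ a z p * u z| :=
          Finset.abs_sum_le_sum_abs _ _
      _ ≤ ∑ z ∈ F, σ a z p * B := by
          refine Finset.sum_le_sum fun z hz => ?_
          rw [abs_mul, abs_of_nonneg (hσ_nonneg a z p hp.1)]
          exact mul_le_mul_of_nonneg_left (hu z (Finset.mem_filter.mp hz).2)
            (hσ_nonneg a z p hp.1)
      _ = (∑ z ∈ F, σ a z p) * B := by rw [Finset.sum_mul]
      _ ≤ 1 * B := by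
          refine mul_le_mul_of_nonneg_right ?_ hB0
          calc ∑ z ∈ F, σ a z p ≤ ∑ z, σ a z p :=
                Finset.sum_le_sum_of_subset_of_nonneg (Finset.filter_subset _ _)
                  (fun z _ _ => hσ_nonneg a z p hp.1)
            _ = 1 := hσ_sum a p hp.2
      _ = B := one_mul B
  -- inf' comparison
  have inf_le : ∀ (f g : A → ℝ) (K : ℝ), (∀ a, f a ≤ g a + K) →
      Finset.univ.inf' Finset.univ_nonempty f ≤ Finset.univ.inf' Finset.univ_nonempty g + K := by
    intro f g K h
    obtain ⟨a, -, ha⟩ := Finset.exists_mem_eq_inf' Finset.univ_nonempty g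
    rw [ha]
    exact le_trans (Finset.inf'_le f (Finset.mem_univ a)) (h a)
  -- KEY pointwise contraction estimate
  have key : ∀ (v w : (I → ℝ) → ℝ) (K : ℝ),
      (∀ q ∈ Δ, |v q - w q| ≤ K) → ∀ p ∈ Δ, |H v p - H w p| ≤ β * K := by
    intro v w K hK p hp
    have hK0 : 0 ≤ K := le_trans (abs_nonneg _) (hK _ hΔne)
    have hdiff : ∀ (v w : (I → ℝ) → ℝ), (∀ q ∈ Δ, |v q - w q| ≤ K) → ∀ a : A,
        (∑ z ∈ Finset.univ.filter (fun z => 0 < σ a z p), σ a z p * v (τ a z p)) -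
        (∑ z ∈ Finset.univ.filter (fun z => 0 < σ a z p), σ a z p * w (τ a z p)) ≤ K := by
      intro v w hvw a
      rw [← Finset.sum_sub_distrib]
      simp_rw [← mul_sub]
      have := hsum_bound p hp a (fun z => v (τ a z p) - w (τ a z p)) K hK0
        (fun z hz => hvw _ (hτ_mem a z p hp hz))
      exact le_trans (le_abs_self _) this
    have hle : ∀ (v w : (I → ℝ) → ℝ), (∀ q ∈ Δ, |v q - w q| ≤ K) →
        H v p ≤ H w p + β * K := by
      intro v w hvw
      rw [hH, hH]
      refine inf_le _ _ _ fun a => ?_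
      have h1 := hdiff v w hvw a
      have h2 := mul_le_mul_of_nonneg_left h1 hβ0
      rw [mul_sub] at h2
      linarith
    have hvw' : ∀ q ∈ Δ, |w q - v q| ≤ K := fun q hq => by
      rw [abs_sub_comm]; exact hK q hq
    rw [abs_sub_le_iff]
    constructor
    · have := hle v w hK; linarith
    · have := hle w v hvw'; linarith
  -- cost bound
  set C : ℝ := Finset.univ.sup' Finset.univ_nonempty (fun a : A => ∑ i, |c a i|) with hCdef
  have hC0 : 0 ≤ C := by
    refine le_trans ?_ (Finset.le_sup' (fun a : A => ∑ i, |c a i|)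
      (Finset.mem_univ (Classical.arbitrary A)))
    exact Finset.sum_nonneg fun i _ => abs_nonneg _
  have hcost : ∀ (a : A) (p : I → ℝ), p ∈ Δ → |∑ i, c a i * p i| ≤ C := by
    intro a p hp
    rw [hΔmem] at hp
    calc |∑ i, c a i * p i| ≤ ∑ i, |c a i * p i| := Finset.abs_sum_le_sum_abs _ _
      _ ≤ ∑ i, |c a i| := by
          refine Finset.sum_le_sum fun i _ => ?_
          rw [abs_mul, abs_of_nonneg (hp.1 i)]
          have hpi : p i ≤ 1 := by
            rw [← hp.2]
            exact Finset.single_le_sum (fun j _ => hp.1 j) (Finset.mem_univ i)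
          nlinarith [abs_nonneg (c a i)]
      _ ≤ C := Finset.le_sup' (fun a : A => ∑ i, |c a i|) (Finset.mem_univ a)
  -- H maps bounded functions to bounded functions
  have hHbound : ∀ (v : (I → ℝ) → ℝ) (B : ℝ), 0 ≤ B → (∀ q ∈ Δ, |v q| ≤ B) →
      ∀ p ∈ Δ, |H v p| ≤ C + β * B := by
    intro v B hB0 hvB p hp
    have hsum : ∀ a : A,
        |∑ z ∈ Finset.univ.filter (fun z => 0 < σ a z p), σ a z p * v (τ a z p)| ≤ B :=
      fun a => hsum_bound p hp a _ B hB0 (fun z hz => hvB _ (hτ_mem a z p hp hz))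
    rw [hH, abs_le]
    constructor
    · refine Finset.le_inf' _ _ fun a _ => ?_
      have h1 := (abs_le.mp (hcost a p hp)).1
      have h2 := (abs_le.mp (hsum a)).1
      have h3 := mul_le_mul_of_nonneg_left h2 hβ0
      nlinarith
    · refine le_trans (Finset.inf'_le _ (Finset.mem_univ (Classical.arbitrary A))) ?_
      have h1 := (abs_le.mp (hcost (Classical.arbitrary A) p hp)).2
      have h2 := (abs_le.mp (hsum (Classical.arbitrary A))).2
      have h3 := mul_le_mul_of_nonneg_left h2 hβ0
      linarith
  -- the iterates
  set v : ℕ → (I → ℝ) → ℝ := fun n => H^[n] 0 with hvdef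
  have hv0 : ∀ p, v 0 p = 0 := fun p => rfl
  have hvsucc : ∀ n, v (n + 1) = H (v n) := fun n => Function.iterate_succ_apply' H n 0
  have h1β : 0 < 1 - β := by linarith
  set Bfull : ℝ := C / (1 - β) with hBfulldef
  have hBfull0 : 0 ≤ Bfull := div_nonneg hC0 h1β.le
  have hvB : ∀ n, ∀ p ∈ Δ, |v n p| ≤ Bfull := by
    intro n
    induction n with
    | zero => intro p hp; rw [hv0]; simpa using hBfull0
    | succ n ih =>
        intro p hp
        rw [hvsucc]
        refine le_trans (hHbound (v n) Bfull hBfull0 ih p hp) ?_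
        have : C + β * Bfull = Bfull * (1 - β) + β * Bfull := by
          rw [hBfulldef]; field_simp
        rw [this]; ring_nf; linarith
  have hstep : ∀ n, ∀ p ∈ Δ, |v n p - v (n + 1) p| ≤ C * β ^ n := by
    intro n
    induction n with
    | zero =>
        intro p hp
        have h := hHbound (v 0) 0 le_rfl (fun q hq => by rw [hv0]; simp) p hp
        rw [hvsucc, hv0, zero_sub, abs_neg, pow_zero, mul_one]
        linarith
    | succ n ih =>
        intro p hp
        rw [hvsucc, hvsucc]
        have := key (v n) (v (n + 1)) (C * β ^ n) ih p hp
        calc |H (v n) p - H (v (n + 1)) p| ≤ β * (C * β ^ n) := this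
          _ = C * β ^ (n + 1) := by ring
  -- convergence of the iterates
  have hcauchy : ∀ p ∈ Δ, ∃ L, Tendsto (fun n => v n p) atTop (nhds L) := by
    intro p hp
    refine cauchySeq_tendsto_of_complete (cauchySeq_of_le_geometric β C hβ1 fun n => ?_)
    rw [Real.dist_eq]
    exact hstep n p hp
  have hex : ∀ p : I → ℝ, ∃ L : ℝ, p ∈ Δ → Tendsto (fun n => v n p) atTop (nhds L) := by
    intro p
    by_cases hp : p ∈ Δ
    · obtain ⟨L, hL⟩ := hcauchy p hp
      exact ⟨L, fun _ => hL⟩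
    · exact ⟨0, fun h => absurd h hp⟩
  choose vstar hvt' using hex
  have hvt : ∀ p ∈ Δ, Tendsto (fun n => v n p) atTop (nhds (vstar p)) :=
    fun p hp => hvt' p hp
  have hdistn : ∀ p ∈ Δ, ∀ n, |v n p - vstar p| ≤ C * β ^ n / (1 - β) := by
    intro p hp n
    have := dist_le_of_le_geometric_of_tendsto β C hβ1
      (f := fun n => v n p) (fun m => by rw [Real.dist_eq]; exact hstep m p hp)
      (hvt p hp) n
    rwa [Real.dist_eq] at this
  -- vstar is bounded
  have hvstarB : ∀ p ∈ Δ, |vstar p| ≤ Bfull := by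
    intro p hp
    exact le_of_tendsto' (hvt p hp).abs (fun n => hvB n p hp)
  -- vstar is a fixed point on Δ
  have hfix : ∀ p ∈ Δ, H vstar p = vstar p := by
    intro p hp
    have h1 : Tendsto (fun n => v (n + 1) p) atTop (nhds (vstar p)) :=
      (hvt p hp).comp (Filter.tendsto_add_atTop_nat 1)
    have h2 : Tendsto (fun n => v (n + 1) p) atTop (nhds (H vstar p)) := by
      rw [tendsto_iff_dist_tendsto_zero]
      refine squeeze_zero (fun n => dist_nonneg) (fun n => ?_)
        (g := fun n => β * (C * β ^ n / (1 - β))) ?_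
      · rw [Real.dist_eq, hvsucc, abs_sub_comm]
        exact key vstar (v n) (C * β ^ n / (1 - β))
          (fun q hq => by rw [abs_sub_comm]; exact hdistn q hq n) p hp
      · have : Tendsto (fun n : ℕ => β ^ n) atTop (nhds 0) :=
          tendsto_pow_atTop_nhds_zero_of_lt_one hβ0 hβ1
        have h3 := this.const_mul (β * C / (1 - β))
        rw [mul_zero] at h3
        refine h3.congr fun n => ?_
        field_simp
    exact tendsto_nhds_unique h2 h1
  -- uniqueness of bounded fixed points on Δ
  have huniq : ∀ w : (I → ℝ) → ℝ, (∃ B, ∀ p ∈ Δ, |w p| ≤ B) →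
      (∀ p ∈ Δ, H w p = w p) → ∀ p ∈ Δ, w p = vstar p := by
    intro w ⟨Bw, hBw⟩ hwfix p hp
    have hiter : ∀ n, ∀ q ∈ Δ, |w q - vstar q| ≤ β ^ n * (Bw + Bfull) := by
      intro n
      induction n with
      | zero =>
          intro q hq
          rw [pow_zero, one_mul]
          calc |w q - vstar q| ≤ |w q| + |vstar q| := abs_sub _ _
            _ ≤ Bw + Bfull := add_le_add (hBw q hq) (hvstarB q hq)
      | succ n ih =>
          intro q hq
          rw [← hwfix q hq, ← hfix q hq]
          calc |H w q - H vstar q| ≤ β * (β ^ n * (Bw + Bfull)) :=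
                key w vstar _ ih q hq
            _ = β ^ (n + 1) * (Bw + Bfull) := by ring
    have hten : Tendsto (fun n : ℕ => β ^ n * (Bw + Bfull)) atTop (nhds 0) := by
      have h3 := (tendsto_pow_atTop_nhds_zero_of_lt_one hβ0 hβ1).mul_const (Bw + Bfull)
      rwa [zero_mul] at h3
    have : |w p - vstar p| ≤ 0 := ge_of_tendsto' hten (fun n => hiter n p hp)
    have := le_antisymm this (abs_nonneg _)
    rwa [abs_eq_zero, sub_eq_zero] at this
  -- linearity facts for concavity
  have hnum_lin : ∀ (a : A) (z : Z) (j : I) (p q : I → ℝ) (t s : ℝ),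
      ∑ i, (t • p + s • q) i * M a z i j = t * ∑ i, p i * M a z i j + s * ∑ i, q i * M a z i j := by
    intro a z j p q t s
    rw [Finset.mul_sum, Finset.mul_sum, ← Finset.sum_add_distrib]
    refine Finset.sum_congr rfl fun i _ => ?_
    simp only [Pi.add_apply, Pi.smul_apply, smul_eq_mul]
    ring
  have hσ_lin : ∀ (a : A) (z : Z) (p q : I → ℝ) (t s : ℝ),
      σ a z (t • p + s • q) = t * σ a z p + s * σ a z q := by
    intro a z p q t s
    rw [hσ_sum_j, hσ_sum_j, hσ_sum_j, Finset.mul_sum, Finset.mul_sum,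
      ← Finset.sum_add_distrib]
    exact Finset.sum_congr rfl fun j _ => hnum_lin a z j p q t s
  -- the per-(a,z) term is concave-compatible
  have hG : ∀ (u : (I → ℝ) → ℝ), ConcaveOn ℝ Δ u → ∀ (a : A) (z : Z),
      ∀ p ∈ Δ, ∀ q ∈ Δ, ∀ t s : ℝ, 0 < t → 0 < s → t + s = 1 →
      t * (if 0 < σ a z p then σ a z p * u (τ a z p) else 0) +
      s * (if 0 < σ a z q then σ a z q * u (τ a z q) else 0) ≤
      (if 0 < σ a z (t • p + s • q) then
        σ a z (t • p + s • q) * u (τ a z (t • p + s • q)) else 0) := by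
    intro u hu a z p hp q hq t s ht hs hts
    set x := t • p + s • q with hx
    have hpmem := (hΔmem p).mp hp
    have hqmem := (hΔmem q).mp hq
    have hσx : σ a z x = t * σ a z p + s * σ a z q := hσ_lin a z p q t s
    have hσp0 := hσ_nonneg a z p hpmem.1
    have hσq0 := hσ_nonneg a z q hqmem.1
    by_cases hxpos : 0 < σ a z x
    · rw [if_pos hxpos]
      by_cases hppos : 0 < σ a z p
      · by_cases hqpos : 0 < σ a z q
        · -- both positive: genuine convex combination
          rw [if_pos hppos, if_pos hqpos]
          set lam := t * σ a z p / σ a z x with hlam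
          set mu := s * σ a z q / σ a z x with hmu
          have hlam0 : 0 ≤ lam := by positivity
          have hmu0 : 0 ≤ mu := by positivity
          have hlammu : lam + mu = 1 := by
            rw [hlam, hmu, ← add_div, hσx, div_self]
            rw [← hσx]; exact hxpos.ne'
          have hτx : τ a z x = lam • τ a z p + mu • τ a z q := by
            funext j
            simp only [Pi.add_apply, Pi.smul_apply, smul_eq_mul]
            rw [hτ, hτ, hτ, hlam, hmu, hnum_lin a z j p q t s, hσx]
            field_simp
          have hcc := hu.2 (hτ_mem a z p hp hppos) (hτ_mem a z q hq hqpos)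
            hlam0 hmu0 hlammu
          rw [← hτx] at hcc
          simp only [smul_eq_mul] at hcc
          have := mul_le_mul_of_nonneg_left hcc hxpos.le
          calc t * (σ a z p * u (τ a z p)) + s * (σ a z q * u (τ a z q))
              = σ a z x * (lam * u (τ a z p) + mu * u (τ a z q)) := by
                rw [hlam, hmu]; field_simp
            _ ≤ σ a z x * u (τ a z x) := this
        · -- σ q = 0
          have hσq : σ a z q = 0 := le_antisymm (not_lt.mp hqpos) hσq0
          rw [if_pos hppos, if_neg hqpos]
          have hnumq : ∀ j, ∑ i, q i * M a z i j = 0 := by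
            have hsum0 : ∑ j, ∑ i, q i * M a z i j = 0 := by rw [← hσ_sum_j, hσq]
            intro j
            exact (Finset.sum_eq_zero_iff_of_nonneg
              (fun j _ => hnum_nonneg a z q hqmem.1 j)).mp hsum0 j (Finset.mem_univ j)
          have hσxp : σ a z x = t * σ a z p := by rw [hσx, hσq]; ring
          have hτx : τ a z x = τ a z p := by
            funext j
            rw [hτ, hτ, hnum_lin a z j p q t s, hnumq j, hσxp]
            rw [mul_zero, add_zero, mul_div_mul_left _ _ ht.ne']
          rw [hτx, hσxp, mul_zero, add_zero, mul_assoc]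
      · -- σ p = 0
        have hσp : σ a z p = 0 := le_antisymm (not_lt.mp hppos) hσp0
        have hqpos : 0 < σ a z q := by
          rcases lt_or_eq_of_le hσq0 with h | h
          · exact h
          · exfalso; rw [hσx, hσp, ← h] at hxpos; simp at hxpos
        rw [if_neg hppos, if_pos hqpos]
        have hnump : ∀ j, ∑ i, p i * M a z i j = 0 := by
          have hsum0 : ∑ j, ∑ i, p i * M a z i j = 0 := by rw [← hσ_sum_j, hσp]
          intro j
          exact (Finset.sum_eq_zero_iff_of_nonneg
            (fun j _ => hnum_nonneg a z p hpmem.1 j)).mp hsum0 j (Finset.mem_univ j)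
        have hσxq : σ a z x = s * σ a z q := by rw [hσx, hσp]; ring
        have hτx : τ a z x = τ a z q := by
          funext j
          rw [hτ, hτ, hnum_lin a z j p q t s, hnump j, hσxq]
          rw [mul_zero, zero_add, mul_div_mul_left _ _ hs.ne']
        rw [hτx, hσxq, mul_zero, zero_add, mul_assoc]
    · -- σ x = 0, hence σ p = σ q = 0
      have hσx0 : σ a z x = 0 :=
        le_antisymm (not_lt.mp hxpos) (hσ_nonneg a z x (fun i => by
          rw [hx]
          simp only [Pi.add_apply, Pi.smul_apply, smul_eq_mul]
          exact add_nonneg (mul_nonneg ht.le (hpmem.1 i)) (mul_nonneg hs.le (hqmem.1 i))))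
      have hσp : σ a z p = 0 := by nlinarith [hσx.symm.trans hσx0]
      have hσq : σ a z q = 0 := by nlinarith [hσx.symm.trans hσx0]
      rw [if_neg hxpos, if_neg (by rw [hσp]; exact lt_irrefl 0),
        if_neg (by rw [hσq]; exact lt_irrefl 0)]
      simp
  -- H preserves concavity on Δ
  have hHconc : ∀ u : (I → ℝ) → ℝ, ConcaveOn ℝ Δ u → ConcaveOn ℝ Δ (H u) := by
    intro u hu
    have hfa : ∀ a : A, ConcaveOn ℝ Δ (fun p => ∑ i, c a i * p i +
        β * ∑ z ∈ Finset.univ.filter (fun z => 0 < σ a z p), σ a z p * u (τ a z p)) := by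
      intro a
      refine ⟨hconv, ?_⟩
      intro p hp q hq t s ht hs hts
      simp only [smul_eq_mul]
      -- handle degenerate weights
      rcases eq_or_lt_of_le ht with ht0 | ht
      · have hs1 : s = 1 := by linarith
        have hxq : t • p + s • q = q := by
          rw [← ht0, hs1]; funext i; simp
        rw [hxq, ← ht0, hs1]
        simp
      rcases eq_or_lt_of_le hs with hs0 | hs
      · have ht1 : t = 1 := by linarith
        have hxp : t • p + s • q = p := by
          rw [← hs0, ht1]; funext i; simp
        rw [hxp, ← hs0, ht1]
        simp
      -- nondegenerate case
      have hlin : ∑ i, c a i * (t • p + s • q) i =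
          t * ∑ i, c a i * p i + s * ∑ i, c a i * q i := by
        rw [Finset.mul_sum, Finset.mul_sum, ← Finset.sum_add_distrib]
        refine Finset.sum_congr rfl fun i _ => ?_
        simp only [Pi.add_apply, Pi.smul_apply, smul_eq_mul]
        ring
      have hsum : t * (∑ z ∈ Finset.univ.filter (fun z => 0 < σ a z p),
            σ a z p * u (τ a z p)) +
          s * (∑ z ∈ Finset.univ.filter (fun z => 0 < σ a z q),
            σ a z q * u (τ a z q)) ≤
          ∑ z ∈ Finset.univ.filter (fun z => 0 < σ a z (t • p + s • q)),
            σ a z (t • p + s • q) * u (τ a z (t • p + s • q)) := by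
        rw [Finset.sum_filter, Finset.sum_filter, Finset.sum_filter,
          Finset.mul_sum, Finset.mul_sum, ← Finset.sum_add_distrib]
        exact Finset.sum_le_sum fun z _ => hG u hu a z p hp q hq t s ht hs hts
      have := mul_le_mul_of_nonneg_left hsum hβ0
      rw [mul_add] at this
      calc t * (∑ i, c a i * p i + β * ∑ z ∈ Finset.univ.filter (fun z => 0 < σ a z p),
              σ a z p * u (τ a z p)) +
            s * (∑ i, c a i * q i + β * ∑ z ∈ Finset.univ.filter (fun z => 0 < σ a z q),
              σ a z q * u (τ a z q))
          = (t * ∑ i, c a i * p i + s * ∑ i, c a i * q i) +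
            (β * (t * ∑ z ∈ Finset.univ.filter (fun z => 0 < σ a z p),
              σ a z p * u (τ a z p)) +
             β * (s * ∑ z ∈ Finset.univ.filter (fun z => 0 < σ a z q),
              σ a z q * u (τ a z q))) := by ring
        _ ≤ (t * ∑ i, c a i * p i + s * ∑ i, c a i * q i) +
            β * ∑ z ∈ Finset.univ.filter (fun z => 0 < σ a z (t • p + s • q)),
              σ a z (t • p + s • q) * u (τ a z (t • p + s • q)) := by linarith
        _ = ∑ i, c a i * (t • p + s • q) i +
            β * ∑ z ∈ Finset.univ.filter (fun z => 0 < σ a z (t • p + s • q)),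
              σ a z (t • p + s • q) * u (τ a z (t • p + s • q)) := by rw [hlin]
    -- now take the infimum over actions
    have heq : H u = fun p => Finset.univ.inf' Finset.univ_nonempty
        (fun a : A => ∑ i, c a i * p i +
          β * ∑ z ∈ Finset.univ.filter (fun z => 0 < σ a z p),
            σ a z p * u (τ a z p)) := funext (hH u)
    rw [heq]
    refine ⟨hconv, ?_⟩
    intro p hp q hq t s ht hs hts
    simp only [smul_eq_mul]
    obtain ⟨a0, -, ha0⟩ := Finset.exists_mem_eq_inf' Finset.univ_nonempty
      (fun a : A => ∑ i, c a i * (t • p + s • q) i +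
        β * ∑ z ∈ Finset.univ.filter (fun z => 0 < σ a z (t • p + s • q)),
          σ a z (t • p + s • q) * u (τ a z (t • p + s • q)))
    rw [ha0]
    have h1 := (hfa a0).2 hp hq ht hs hts
    have h2 : Finset.univ.inf' Finset.univ_nonempty
        (fun a : A => ∑ i, c a i * p i +
          β * ∑ z ∈ Finset.univ.filter (fun z => 0 < σ a z p),
            σ a z p * u (τ a z p)) ≤ ∑ i, c a0 i * p i +
          β * ∑ z ∈ Finset.univ.filter (fun z => 0 < σ a0 z p),
            σ a0 z p * u (τ a0 z p) := Finset.inf'_le _ (Finset.mem_univ a0)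
    have h3 : Finset.univ.inf' Finset.univ_nonempty
        (fun a : A => ∑ i, c a i * q i +
          β * ∑ z ∈ Finset.univ.filter (fun z => 0 < σ a z q),
            σ a z q * u (τ a z q)) ≤ ∑ i, c a0 i * q i +
          β * ∑ z ∈ Finset.univ.filter (fun z => 0 < σ a0 z q),
            σ a0 z q * u (τ a0 z q) := Finset.inf'_le _ (Finset.mem_univ a0)
    simp only [smul_eq_mul] at h1
    nlinarith [mul_le_mul_of_nonneg_left h2 ht, mul_le_mul_of_nonneg_left h3 hs]
  -- iterates are concave
  have hvconc : ∀ n, ConcaveOn ℝ Δ (v n) := by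
    intro n
    induction n with
    | zero =>
        have : v 0 = fun _ => (0 : ℝ) := rfl
        rw [this]
        exact concaveOn_const 0 hconv
    | succ n ih =>
        rw [hvsucc]
        exact hHconc (v n) ih
  -- the limit is concave
  have hvstarconc : ConcaveOn ℝ Δ vstar := by
    refine ⟨hconv, ?_⟩
    intro p hp q hq t s ht hs hts
    have hxmem : t • p + s • q ∈ Δ := hconv hp hq ht hs hts
    have h1 : Tendsto (fun n => t * v n p + s * v n q) atTop
        (nhds (t * vstar p + s * vstar q)) :=
      ((hvt p hp).const_mul t).add ((hvt q hq).const_mul s)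
    have h2 := hvt _ hxmem
    simp only [smul_eq_mul]
    exact le_of_tendsto_of_tendsto' h1 h2 fun n => by
      have := (hvconc n).2 hp hq ht hs hts
      simpa using this
  refine ⟨?_, vstar, ⟨Bfull, hvstarB⟩, hfix, huniq, hvstarconc⟩
  -- part 1: the Lipschitz/contraction estimate with the sup distance
  intro vv ww ⟨Bv, hBv⟩ ⟨Bw, hBw⟩ p hp
  have hbdd : BddAbove (Set.range fun q : Δ => |vv q.1 - ww q.1|) := by
    refine ⟨Bv + Bw, ?_⟩
    rintro x ⟨q, rfl⟩
    calc |vv q.1 - ww q.1| ≤ |vv q.1| + |ww q.1| := abs_sub _ _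
      _ ≤ Bv + Bw := add_le_add (hBv q.1 q.2) (hBw q.1 q.2)
  exact key vv ww _ (fun q hq => le_ciSup hbdd ⟨q, hq⟩) p hp
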